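/- Let V be a finite-dimensional complex vector space, W a finite-dimensional complex vector space, N ∈ End(W) nilpotent, Q : W → V and P : V → W linear maps. Suppose for every N-invariant subspace Y ⊆ W: (i) if Q(Y) = 0 then Y = 0, and (ii) if Im P ⊆ Y then Y = W. Then this holds if and only if Ker Q ∩ Ker N = 0 and Im P + Im N = W. -/

import Mathlib

/-- a datum `(V,W,N,Q,P)` with `N` nilpotent is stable (every `N`-invariant
subspace `Y ⊆ W` with `Q(Y) = 0` is zero, and every `N`-invariant subspace containing
`Im P` is all of `W`) iff `Ker Q ∩ Ker N = 0` and `Im P + Im N = W`. -/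
theorem stmt0
    (V W : Type*) [AddCommGroup V] [Module ℂ V] [FiniteDimensional ℂ V]
    [AddCommGroup W] [Module ℂ W] [FiniteDimensional ℂ W]
    (N : W →ₗ[ℂ] W) (hN : IsNilpotent N) (Q : W →ₗ[ℂ] V) (P : V →ₗ[ℂ] W) :
    ((∀ Y : Submodule ℂ W, Y.map N ≤ Y → Y.map Q = ⊥ → Y = ⊥) ∧
      (∀ Y : Submodule ℂ W, Y.map N ≤ Y → LinearMap.range P ≤ Y → Y = ⊤)) ↔
    (LinearMap.ker Q ⊓ LinearMap.ker N = ⊥ ∧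
      LinearMap.range P ⊔ LinearMap.range N = ⊤) := by
  obtain ⟨n, hn⟩ := hN
  constructor
  · rintro ⟨h1, h2⟩
    constructor
    · apply h1
      · rintro x ⟨y, hy, rfl⟩
        have : N y = 0 := hy.2
        rw [this]
        exact Submodule.zero_mem _
      · rw [eq_bot_iff]
        rintro x ⟨y, hy, rfl⟩
        have : Q y = 0 := hy.1
        simp [this]
    · apply h2
      · rintro x ⟨y, hy, rfl⟩
        exact le_sup_right (α := Submodule ℂ W) ⟨y, rfl⟩
      · exact le_sup_left
  · rintro ⟨hker, hrange⟩
    constructor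
    · intro Y hNY hQY
      rw [eq_bot_iff]
      intro y hy
      have hYQ : Y ≤ LinearMap.ker Q := by
        intro z hz
        have : Q z ∈ Y.map Q := Submodule.mem_map_of_mem hz
        rw [hQY] at this
        simpa using this
      have hpow : ∀ j, (N ^ j) y ∈ Y := by
        intro j
        induction j with
        | zero => simpa using hy
        | succ j ih =>
          have := hNY (Submodule.mem_map_of_mem ih)
          rw [pow_succ', Module.End.mul_apply]
          exact this
      have key : ∀ k, (N ^ (n - k)) y = 0 := by
        intro k
        induction k with
        | zero => simp [hn]
        | succ k ih =>
          rcases Nat.eq_zero_or_pos (n - k) with h0 | hpos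
          · have h : n - (k + 1) = 0 := by omega
            rw [h, ← h0]
            exact ih
          · have heq : n - k = (n - (k + 1)) + 1 := by omega
            rw [heq, pow_succ', Module.End.mul_apply] at ih
            have hmem : (N ^ (n - (k + 1))) y ∈ LinearMap.ker Q ⊓ LinearMap.ker N :=
              ⟨hYQ (hpow _), ih⟩
            rw [hker] at hmem
            simpa using hmem
      have := key n
      simpa using this
    · intro Y hNY hPY
      have key : ∀ k, (⊤ : Submodule ℂ W) ≤ Y ⊔ (⊤ : Submodule ℂ W).map (N ^ (k + 1)) := by
        intro k
        induction k with
        | zero =>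
          refine le_trans hrange.ge (sup_le ?_ ?_)
          · exact le_trans hPY le_sup_left
          · rw [LinearMap.range_eq_map, pow_one]
            exact le_sup_right
        | succ k ih =>
          have h1 : (⊤ : Submodule ℂ W) ≤ Y ⊔ (⊤ : Submodule ℂ W).map N := by
            refine le_trans hrange.ge (sup_le ?_ ?_)
            · exact le_trans hPY le_sup_left
            · rw [LinearMap.range_eq_map]
              exact le_sup_right
          have h2 : (⊤ : Submodule ℂ W).map N ≤ Y ⊔ (⊤ : Submodule ℂ W).map (N ^ (k + 2)) := by
            refine le_trans (Submodule.map_mono ih) ?_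
            rw [Submodule.map_sup]
            apply sup_le
            · exact le_trans hNY le_sup_left
            · rw [← Submodule.map_comp]
              have hc : N ∘ₗ N ^ (k + 1) = N ^ (k + 2) := by
                rw [pow_succ' N (k+1), Module.End.mul_eq_comp]
              rw [hc]
              exact le_sup_right
          refine le_trans h1 (sup_le le_sup_left h2)
      have h := key n
      rw [eq_top_iff]
      refine le_trans h ?_
      have hz : N ^ (n + 1) = 0 := by
        rw [pow_succ, hn, zero_mul]
      rw [hz]
      simp
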